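/- Let v : ℂ → ℂ be analytic on a neighborhood of a real point x₀ with v(x₀) = 0 and v′(x₀) = 0, and let S : ℝ × ℂ → ℂ be jointly analytic near ℝ × {x₀} (so mixed partial derivatives commute), satisfying ∂ₜS(t, z) = −2i·v(z)·∂_zS(t, z) and S(0, z) = z. Then for all t ∈ ℝ: (i) ∂_zS(t, x₀) = 1 (Γₜ remains tangent to the real axis at x₀); and (ii) ∂_z²S(t, x₀) = −2i·t·v″(x₀), so that the signed curvature κ(t, x₀) = (i/2)·∂_z²S(t,x₀)/(∂_zS(t,x₀))^{3/2} = t·v″(x₀) changes at the constant rate v″(x₀). -/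

import Mathlib

open Complex Filter

lemma derivAnalyticAt {f : ℂ → ℂ} {x : ℂ} (h : AnalyticAt ℂ f x) :
    AnalyticAt ℂ (deriv f) x :=
  (AnalyticOnNhd.deriv (fun _ hz => hz : AnalyticOnNhd ℂ f {z | AnalyticAt ℂ f z})) x h

lemma key (v g : ℂ → ℂ) (x₀ : ℂ) (hv : AnalyticAt ℂ v x₀) (hg : AnalyticAt ℂ g x₀)
    (hv0 : v x₀ = 0) (hv1 : deriv v x₀ = 0) :
    deriv (fun z => -2 * Complex.I * v z * g z) x₀ = 0 ∧
    deriv (deriv (fun z => -2 * Complex.I * v z * g z)) x₀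
      = -2 * Complex.I * deriv (deriv v) x₀ * g x₀ := by
  have hev : ∀ᶠ z in nhds x₀, AnalyticAt ℂ v z ∧ AnalyticAt ℂ g z :=
    hv.eventually_analyticAt.and hg.eventually_analyticAt
  have heq : deriv (fun w => -2 * Complex.I * v w * g w)
      =ᶠ[nhds x₀] fun z => -2 * Complex.I * deriv v z * g z + -2 * Complex.I * v z * deriv g z := by
    filter_upwards [hev] with z hz
    exact (((hz.1.differentiableAt.hasDerivAt.const_mul (-2 * Complex.I)).mul
      hz.2.differentiableAt.hasDerivAt)).deriv
  constructor
  · rw [heq.self_of_nhds]; simp only [hv0, hv1]; ring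
  · rw [heq.deriv_eq]
    have h1 : HasDerivAt (fun z => -2 * Complex.I * deriv v z * g z + -2 * Complex.I * v z * deriv g z)
        ((-2 * Complex.I * deriv (deriv v) x₀ * g x₀ + -2 * Complex.I * deriv v x₀ * deriv g x₀)
          + (-2 * Complex.I * deriv v x₀ * deriv g x₀ + -2 * Complex.I * v x₀ * deriv (deriv g) x₀)) x₀ :=
      (((derivAnalyticAt hv).differentiableAt.hasDerivAt.const_mul (-2 * Complex.I)).mul
        hg.differentiableAt.hasDerivAt).add
        ((hv.differentiableAt.hasDerivAt.const_mul (-2 * Complex.I)).mul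
          (derivAnalyticAt hg).differentiableAt.hasDerivAt)
    rw [h1.deriv, hv0, hv1]; ring

theorem stmt9 (x₀ : ℝ) (v : ℂ → ℂ) (S : ℝ → ℂ → ℂ) (U : Set ℂ)
    (hU : IsOpen U) (hx₀ : (x₀ : ℂ) ∈ U)
    (hv : AnalyticAt ℂ v (x₀ : ℂ)) (hv0 : v (x₀ : ℂ) = 0) (hv1 : deriv v (x₀ : ℂ) = 0)
    (hanal : ∀ t : ℝ, AnalyticAt ℂ (S t) (x₀ : ℂ))
    (hPDE : ∀ t : ℝ, ∀ z ∈ U,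
      HasDerivAt (fun u => S u z) (-2 * Complex.I * v z * deriv (S t) z) t)
    (hmix : ∀ t : ℝ, HasDerivAt (fun u => deriv (S u) (x₀ : ℂ))
      (deriv (fun z => -2 * Complex.I * v z * deriv (S t) z) (x₀ : ℂ)) t)
    (hmix2 : ∀ t : ℝ, HasDerivAt (fun u => deriv (deriv (S u)) (x₀ : ℂ))
      (deriv (deriv (fun z => -2 * Complex.I * v z * deriv (S t) z)) (x₀ : ℂ)) t)
    (hid : ∀ z : ℂ, S 0 z = z) :
    ∀ t : ℝ, deriv (S t) (x₀ : ℂ) = 1 ∧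
      deriv (deriv (S t)) (x₀ : ℂ) = -2 * Complex.I * t * deriv (deriv v) (x₀ : ℂ) ∧
      Complex.I / 2 * deriv (deriv (S t)) (x₀ : ℂ) = t * deriv (deriv v) (x₀ : ℂ) := by
  have hS0 : S 0 = id := funext hid
  have hkey := fun t : ℝ => key v (deriv (S t)) (x₀ : ℂ) hv (derivAnalyticAt (hanal t)) hv0 hv1
  -- Part 1
  have hF : ∀ t : ℝ, HasDerivAt (fun u => deriv (S u) (x₀ : ℂ)) 0 t := by
    intro t
    have := hmix t
    rwa [(hkey t).1] at this
  have part1 : ∀ t : ℝ, deriv (S t) (x₀ : ℂ) = 1 := by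
    intro t
    have hc : (fun u => deriv (S u) (x₀ : ℂ)) t = (fun u => deriv (S u) (x₀ : ℂ)) 0 :=
      is_const_of_deriv_eq_zero (fun u => (hF u).differentiableAt)
        (fun u => (hF u).deriv) t 0
    simpa [hS0, deriv_id] using hc
  -- Part 2
  set k : ℂ := -2 * Complex.I * deriv (deriv v) (x₀ : ℂ) with hk
  have hG : ∀ t : ℝ, HasDerivAt (fun u => deriv (deriv (S u)) (x₀ : ℂ)) k t := by
    intro t
    have := hmix2 t
    rw [(hkey t).2, part1 t] at this
    simpa using this
  have hlin : ∀ t : ℝ, HasDerivAt (fun u : ℝ => k * (u : ℂ)) k t := by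
    intro t
    have : HasDerivAt (fun z : ℂ => k * z) (k * 1) ((t : ℝ) : ℂ) :=
      (hasDerivAt_id _).const_mul k
    simpa using this.comp_ofReal
  have hH : ∀ t : ℝ, HasDerivAt (fun u : ℝ => deriv (deriv (S u)) (x₀ : ℂ) - k * u) 0 t := by
    intro t
    simpa using (hG t).fun_sub (hlin t)
  have part2 : ∀ t : ℝ, deriv (deriv (S t)) (x₀ : ℂ) = -2 * Complex.I * t * deriv (deriv v) (x₀ : ℂ) := by
    intro t
    have hc : (fun u : ℝ => deriv (deriv (S u)) (x₀ : ℂ) - k * u) t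
        = (fun u : ℝ => deriv (deriv (S u)) (x₀ : ℂ) - k * u) 0 :=
      is_const_of_deriv_eq_zero (fun u => (hH u).differentiableAt)
        (fun u => (hH u).deriv) t 0
    have hid2 : deriv (deriv (S 0)) (x₀ : ℂ) = 0 := by
      rw [hS0]
      have : deriv (id : ℂ → ℂ) = fun _ => (1 : ℂ) := funext fun z => deriv_id z
      rw [this]
      simp
    simp only [hid2, Complex.ofReal_zero, mul_zero, sub_zero] at hc
    rw [sub_eq_zero] at hc
    rw [hc, hk]; ring
  intro t
  refine ⟨part1 t, part2 t, ?_⟩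
  rw [part2 t]
  have hI := Complex.I_mul_I
  linear_combination (-(↑t * deriv (deriv v) (x₀ : ℂ))) * hI
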